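/- In the ideal transitivity network without complete diagonal blocks, the number of 3-element subsets of V inducing triad type 030T equals n₀·n₁·n₂; the number inducing 021U equals C(n₀,2)·(n₁+n₂) + C(n₁,2)·n₂; the number inducing 021D equals n₀·(C(n₁,2)+C(n₂,2)) + n₁·C(n₂,2); the number inducing 003 equals C(n₀,3)+C(n₁,3)+C(n₂,3); and no 3-element subset induces any other triad type. -/

import Mathlib

variable {V : Type*}

/-- Dyad `{i, j}` is mutual: both arcs present. -/
def Mutual (A : V → V → Prop) (i j : V) : Prop := A i j ∧ A j i

/-- Dyad `{i, j}` is null: no arc present. -/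
def NullDyad (A : V → V → Prop) (i j : V) : Prop := ¬ A i j ∧ ¬ A j i

/-- Dyad `{i, j}` is asymmetric: exactly one of the two arcs is present. -/
def AsymDyad (A : V → V → Prop) (i j : V) : Prop :=
  (A i j ∧ ¬ A j i) ∨ (¬ A i j ∧ A j i)

/-- Triad type 003: all three dyads null. -/
def Triad003 (A : V → V → Prop) (i j k : V) : Prop :=
  NullDyad A i j ∧ NullDyad A j k ∧ NullDyad A i k

/-- Triad type 300: all three dyads mutual. -/
def Triad300 (A : V → V → Prop) (i j k : V) : Prop :=
  Mutual A i j ∧ Mutual A j k ∧ Mutual A i k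

/-- Triad type 102: one mutual dyad, both remaining dyads null. -/
def Triad102 (A : V → V → Prop) (i j k : V) : Prop :=
  (Mutual A i j ∧ NullDyad A j k ∧ NullDyad A i k) ∨
  (Mutual A j k ∧ NullDyad A i j ∧ NullDyad A i k) ∨
  (Mutual A i k ∧ NullDyad A i j ∧ NullDyad A j k)

/-- Triad type 201: two mutual dyads, the remaining dyad null. -/
def Triad201 (A : V → V → Prop) (i j k : V) : Prop :=
  (Mutual A i j ∧ Mutual A j k ∧ NullDyad A i k) ∨
  (Mutual A i j ∧ Mutual A i k ∧ NullDyad A j k) ∨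
  (Mutual A j k ∧ Mutual A i k ∧ NullDyad A i j)

/-- Triad type 012: exactly one asymmetric dyad, both remaining dyads null. -/
def Triad012 (A : V → V → Prop) (i j k : V) : Prop :=
  (AsymDyad A i j ∧ NullDyad A j k ∧ NullDyad A i k) ∨
  (AsymDyad A j k ∧ NullDyad A i j ∧ NullDyad A i k) ∨
  (AsymDyad A i k ∧ NullDyad A i j ∧ NullDyad A j k)

/-- Two asymmetric arcs `x → z` and `y → z` with common head `z`, dyad `{x, y}` null. -/
def Head021U (A : V → V → Prop) (x y z : V) : Prop :=
  A x z ∧ A y z ∧ ¬ A z x ∧ ¬ A z y ∧ NullDyad A x y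

/-- Triad type 021U: two asymmetric arcs with a common head, remaining dyad null. -/
def Triad021U (A : V → V → Prop) (i j k : V) : Prop :=
  Head021U A i j k ∨ Head021U A i k j ∨ Head021U A j k i

/-- Two asymmetric arcs `z → x` and `z → y` with common tail `z`, dyad `{x, y}` null. -/
def Tail021D (A : V → V → Prop) (x y z : V) : Prop :=
  A z x ∧ A z y ∧ ¬ A x z ∧ ¬ A y z ∧ NullDyad A x y

/-- Triad type 021D: two asymmetric arcs with a common tail, remaining dyad null. -/
def Triad021D (A : V → V → Prop) (i j k : V) : Prop :=
  Tail021D A i j k ∨ Tail021D A i k j ∨ Tail021D A j k i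

/-- A directed path `x → y → z` with all other arcs among the three vertices absent. -/
def Path021C (A : V → V → Prop) (x y z : V) : Prop :=
  A x y ∧ A y z ∧ ¬ A y x ∧ ¬ A z y ∧ NullDyad A x z

/-- Triad type 021C. -/
def Triad021C (A : V → V → Prop) (i j k : V) : Prop :=
  Path021C A i j k ∨ Path021C A i k j ∨ Path021C A j i k ∨
  Path021C A j k i ∨ Path021C A k i j ∨ Path021C A k j i

/-- Mutual dyad `{x, y}` plus asymmetric arcs from each of `x`, `y` to the third vertex `z`. -/
def Up120 (A : V → V → Prop) (x y z : V) : Prop :=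
  Mutual A x y ∧ A x z ∧ A y z ∧ ¬ A z x ∧ ¬ A z y

/-- Triad type 120U. -/
def Triad120U (A : V → V → Prop) (i j k : V) : Prop :=
  Up120 A i j k ∨ Up120 A i k j ∨ Up120 A j k i

/-- Mutual dyad `{x, y}` plus asymmetric arcs from the third vertex `z` to each of `x`, `y`. -/
def Down120 (A : V → V → Prop) (x y z : V) : Prop :=
  Mutual A x y ∧ A z x ∧ A z y ∧ ¬ A x z ∧ ¬ A y z

/-- Triad type 120D. -/
def Triad120D (A : V → V → Prop) (i j k : V) : Prop :=
  Down120 A i j k ∨ Down120 A i k j ∨ Down120 A j k i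

/-- Transitive triple: arcs `x → y`, `y → z`, `x → z`, with no reverse arcs. -/
def Trans030 (A : V → V → Prop) (x y z : V) : Prop :=
  A x y ∧ A y z ∧ A x z ∧ ¬ A y x ∧ ¬ A z y ∧ ¬ A z x

/-- Triad type 030T. -/
def Triad030T (A : V → V → Prop) (i j k : V) : Prop :=
  Trans030 A i j k ∨ Trans030 A i k j ∨ Trans030 A j i k ∨
  Trans030 A j k i ∨ Trans030 A k i j ∨ Trans030 A k j i

/-- Cyclic triple: arcs `x → y`, `y → z`, `z → x`, with no reverse arcs. -/
def Cycle030 (A : V → V → Prop) (x y z : V) : Prop :=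
  A x y ∧ A y z ∧ A z x ∧ ¬ A y x ∧ ¬ A z y ∧ ¬ A x z

/-- Triad type 030C. -/
def Triad030C (A : V → V → Prop) (i j k : V) : Prop :=
  Cycle030 A i j k ∨ Cycle030 A i k j

/-- The 3-element subset `s` induces the triad type `T`. -/
def InducesTriad [DecidableEq V] (T : V → V → V → Prop) (s : Finset V) : Prop :=
  ∃ i j k : V, i ≠ j ∧ i ≠ k ∧ j ≠ k ∧ s = {i, j, k} ∧ T i j k

/-- The ideal transitivity network without complete blocks on the diagonal:
an arc from `i` to `j` iff the level of `i` is strictly smaller than the level of `j`. -/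
def TransAdj (c : V → Fin 3) (i j : V) : Prop := (c i : ℕ) < (c j : ℕ)

section CensusAux

open Finset

variable [DecidableEq V]

/-- The set of vertices at a given level. -/
private def levSet [Fintype V] (c : V → Fin 3) (x : Fin 3) : Finset V :=
  Finset.univ.filter fun v => c v = x

private lemma mem_levSet0 [Fintype V] {c : V → Fin 3} {v : V} :
    v ∈ levSet c 0 ↔ (c v : ℕ) = 0 := by
  simp only [levSet, Finset.mem_filter, Finset.mem_univ, true_and, Fin.ext_iff, Fin.val_zero]

private lemma mem_levSet1 [Fintype V] {c : V → Fin 3} {v : V} :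
    v ∈ levSet c 1 ↔ (c v : ℕ) = 1 := by
  simp [levSet, Fin.ext_iff]

private lemma mem_levSet2 [Fintype V] {c : V → Fin 3} {v : V} :
    v ∈ levSet c 2 ↔ (c v : ℕ) = 2 := by
  simp [levSet, Fin.ext_iff]

private lemma levSet_disj [Fintype V] (c : V → Fin 3) {x y : Fin 3} (h : x ≠ y) :
    Disjoint (levSet c x) (levSet c y) := by
  rw [Finset.disjoint_left]
  intro v hv hv'
  simp only [levSet, Finset.mem_filter] at hv hv'
  exact h (hv.2 ▸ hv'.2)

/-- Sets consisting of one element from each of `S`, `T`, `U`. -/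
private def oneOneOne (S T U : Finset V) : Finset (Finset V) :=
  (S ×ˢ T ×ˢ U).image fun p => ({p.1, p.2.1, p.2.2} : Finset V)

private lemma card_oneOneOne (S T U : Finset V) (hST : Disjoint S T)
    (hSU : Disjoint S U) (hTU : Disjoint T U) :
    (oneOneOne S T U).card = S.card * T.card * U.card := by
  rw [oneOneOne, Finset.card_image_of_injOn, Finset.card_product, Finset.card_product,
    mul_assoc]
  rintro ⟨a, b, d⟩ hp ⟨a', b', d'⟩ hq h
  simp only [Finset.mem_coe, Finset.mem_product] at hp hq
  obtain ⟨haS, hbT, hdU⟩ := hp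
  obtain ⟨haS', hbT', hdU'⟩ := hq
  simp only at h
  have h1 : a' ∈ ({a, b, d} : Finset V) := by rw [h]; simp
  have h2 : b' ∈ ({a, b, d} : Finset V) := by rw [h]; simp
  have h3 : d' ∈ ({a, b, d} : Finset V) := by rw [h]; simp
  simp only [Finset.mem_insert, Finset.mem_singleton] at h1 h2 h3
  obtain rfl : a' = a := by
    rcases h1 with rfl | rfl | rfl
    · rfl
    · exact absurd hbT (Finset.disjoint_left.mp hST haS')
    · exact absurd hdU (Finset.disjoint_left.mp hSU haS')
  obtain rfl : b' = b := by
    rcases h2 with rfl | rfl | rfl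
    · exact absurd hbT' (Finset.disjoint_left.mp hST haS)
    · rfl
    · exact absurd hdU (Finset.disjoint_left.mp hTU hbT')
  obtain rfl : d' = d := by
    rcases h3 with rfl | rfl | rfl
    · exact absurd hdU' (Finset.disjoint_left.mp hSU haS)
    · exact absurd hdU' (Finset.disjoint_left.mp hTU hbT)
    · rfl
  rfl

/-- Sets consisting of two elements from `S` and one from `T`. -/
private def pairSingle (S T : Finset V) : Finset (Finset V) :=
  ((S.powersetCard 2) ×ˢ T).image fun p => insert p.2 p.1

private lemma card_pairSingle (S T : Finset V) (hST : Disjoint S T) :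
    (pairSingle S T).card = S.card.choose 2 * T.card := by
  rw [pairSingle, Finset.card_image_of_injOn, Finset.card_product,
    Finset.card_powersetCard]
  rintro ⟨t, v⟩ hp ⟨t', v'⟩ hq h
  simp only [Finset.mem_coe, Finset.mem_product, Finset.mem_powersetCard] at hp hq
  obtain ⟨⟨htS, -⟩, hvT⟩ := hp
  obtain ⟨⟨htS', -⟩, hvT'⟩ := hq
  simp only at h
  have hvt : v ∉ t := fun hv => Finset.disjoint_left.mp hST (htS hv) hvT
  have hvt' : v' ∉ t' := fun hv => Finset.disjoint_left.mp hST (htS' hv) hvT'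
  have hv : v' = v := by
    have hm : v' ∈ insert v t := by rw [h]; simp
    rcases Finset.mem_insert.mp hm with h' | h'
    · exact h'
    · exact absurd hvT' (Finset.disjoint_left.mp hST (htS h'))
  have hvt'' : v ∉ t' := hv ▸ hvt'
  have ht : t = t' := by
    have h2 := congrArg (fun u => Finset.erase u v) h
    rw [hv] at h2
    simpa [Finset.erase_insert hvt, Finset.erase_insert hvt''] using h2
  simp [Prod.ext_iff, ht, hv]

private lemma mem_pairSingle {S T : Finset V} {x y z : V} (hxy : x ≠ y)
    (hx : x ∈ S) (hy : y ∈ S) (hz : z ∈ T) {s : Finset V}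
    (hs : insert z ({x, y} : Finset V) = s) :
    s ∈ pairSingle S T :=
  Finset.mem_image.mpr ⟨({x, y}, z),
    Finset.mem_product.mpr ⟨Finset.mem_powersetCard.mpr
      ⟨by simp [Finset.insert_subset_iff, hx, hy], Finset.card_pair hxy⟩, hz⟩, hs⟩

private lemma of_mem_pairSingle {S T : Finset V} {s : Finset V}
    (h : s ∈ pairSingle S T) :
    ∃ x y z, x ≠ y ∧ x ∈ S ∧ y ∈ S ∧ z ∈ T ∧ s = insert z ({x, y} : Finset V) := by
  obtain ⟨⟨t, z⟩, hp, rfl⟩ := Finset.mem_image.mp h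
  obtain ⟨ht, hz⟩ := Finset.mem_product.mp hp
  obtain ⟨hsub, hcard⟩ := Finset.mem_powersetCard.mp ht
  obtain ⟨x, y, hxy, rfl⟩ := Finset.card_eq_two.mp hcard
  exact ⟨x, y, z, hxy, hsub (by simp), hsub (by simp), hz, rfl⟩

private lemma of_mem_ps3 {S : Finset V} {s : Finset V} (h : s ∈ S.powersetCard 3) :
    ∃ x y z, x ≠ y ∧ x ≠ z ∧ y ≠ z ∧ x ∈ S ∧ y ∈ S ∧ z ∈ S ∧
      s = ({x, y, z} : Finset V) := by
  obtain ⟨hsub, hcard⟩ := Finset.mem_powersetCard.mp h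
  obtain ⟨x, y, z, hxy, hxz, hyz, rfl⟩ := Finset.card_eq_three.mp hcard
  exact ⟨x, y, z, hxy, hxz, hyz, hsub (by simp), hsub (by simp), hsub (by simp), rfl⟩

private lemma mem_ps3 {S : Finset V} {x y z : V} (hxy : x ≠ y) (hxz : x ≠ z)
    (hyz : y ≠ z) (hx : x ∈ S) (hy : y ∈ S) (hz : z ∈ S) :
    ({x, y, z} : Finset V) ∈ S.powersetCard 3 :=
  Finset.mem_powersetCard.mpr ⟨by simp [Finset.insert_subset_iff, hx, hy, hz],
    Finset.card_eq_three.mpr ⟨x, y, z, hxy, hxz, hyz, rfl⟩⟩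

set_option maxHeartbeats 1000000 in
private lemma census_E1 [Fintype V] (c : V → Fin 3) :
    {s : Finset V | InducesTriad (Triad030T (TransAdj c)) s}
    = ↑(oneOneOne (levSet c 0) (levSet c 1) (levSet c 2)) := by
  ext s
  simp only [Set.mem_setOf_eq, Finset.mem_coe, oneOneOne, Finset.mem_image,
    Finset.mem_product, Prod.exists]
  constructor
  · rintro ⟨i, j, k, hij, hik, hjk, rfl, hT⟩
    have bi := (c i).isLt
    have bj := (c j).isLt
    have bk := (c k).isLt
    simp only [Triad030T, Trans030, TransAdj] at hT
    rcases hT with ⟨h1, h2, -⟩ | ⟨h1, h2, -⟩ | ⟨h1, h2, -⟩ | ⟨h1, h2, -⟩ |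
      ⟨h1, h2, -⟩ | ⟨h1, h2, -⟩
    · exact ⟨i, j, k, ⟨mem_levSet0.mpr (by omega), mem_levSet1.mpr (by omega),
        mem_levSet2.mpr (by omega)⟩, by ext t; simp; try tauto⟩
    · exact ⟨i, k, j, ⟨mem_levSet0.mpr (by omega), mem_levSet1.mpr (by omega),
        mem_levSet2.mpr (by omega)⟩, by ext t; simp; try tauto⟩
    · exact ⟨j, i, k, ⟨mem_levSet0.mpr (by omega), mem_levSet1.mpr (by omega),
        mem_levSet2.mpr (by omega)⟩, by ext t; simp; try tauto⟩
    · exact ⟨j, k, i, ⟨mem_levSet0.mpr (by omega), mem_levSet1.mpr (by omega),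
        mem_levSet2.mpr (by omega)⟩, by ext t; simp; try tauto⟩
    · exact ⟨k, i, j, ⟨mem_levSet0.mpr (by omega), mem_levSet1.mpr (by omega),
        mem_levSet2.mpr (by omega)⟩, by ext t; simp; try tauto⟩
    · exact ⟨k, j, i, ⟨mem_levSet0.mpr (by omega), mem_levSet1.mpr (by omega),
        mem_levSet2.mpr (by omega)⟩, by ext t; simp; try tauto⟩
  · rintro ⟨a, b, d, ⟨ha, hb, hd⟩, rfl⟩
    rw [mem_levSet0] at ha
    rw [mem_levSet1] at hb
    rw [mem_levSet2] at hd
    refine ⟨a, b, d, fun h => by rw [h] at ha; omega, fun h => by rw [h] at ha; omega,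
      fun h => by rw [h] at hb; omega, rfl, Or.inl ?_⟩
    simp only [Trans030, TransAdj]
    omega

set_option maxHeartbeats 1000000 in
private lemma census_E2 [Fintype V] (c : V → Fin 3) :
    {s : Finset V | InducesTriad (Triad021U (TransAdj c)) s}
    = ↑(pairSingle (levSet c 0) (levSet c 1 ∪ levSet c 2) ∪
        pairSingle (levSet c 1) (levSet c 2)) := by
  ext s
  simp only [Set.mem_setOf_eq, Finset.mem_coe, Finset.mem_union]
  constructor
  · rintro ⟨i, j, k, hij, hik, hjk, rfl, hT⟩
    have bi := (c i).isLt
    have bj := (c j).isLt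
    have bk := (c k).isLt
    simp only [Triad021U, Head021U, NullDyad, TransAdj] at hT
    rcases hT with ⟨h1, h2, -, -, h5, h6⟩ | ⟨h1, h2, -, -, h5, h6⟩ |
      ⟨h1, h2, -, -, h5, h6⟩
    · rcases (show (c i : ℕ) = 0 ∨ (c i : ℕ) = 1 by omega) with h0 | h0
      · refine Or.inl (mem_pairSingle (z := k) hij (mem_levSet0.mpr (by omega))
          (mem_levSet0.mpr (by omega)) (Finset.mem_union.mpr ?_) (by ext t; simp; try tauto))
        rcases (show (c k : ℕ) = 1 ∨ (c k : ℕ) = 2 by omega) with h' | h'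
        exacts [Or.inl (mem_levSet1.mpr h'), Or.inr (mem_levSet2.mpr h')]
      · exact Or.inr (mem_pairSingle (z := k) hij (mem_levSet1.mpr (by omega))
          (mem_levSet1.mpr (by omega)) (mem_levSet2.mpr (by omega)) (by ext t; simp; try tauto))
    · rcases (show (c i : ℕ) = 0 ∨ (c i : ℕ) = 1 by omega) with h0 | h0
      · refine Or.inl (mem_pairSingle (z := j) hik (mem_levSet0.mpr (by omega))
          (mem_levSet0.mpr (by omega)) (Finset.mem_union.mpr ?_) (by ext t; simp; try tauto))
        rcases (show (c j : ℕ) = 1 ∨ (c j : ℕ) = 2 by omega) with h' | h'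
        exacts [Or.inl (mem_levSet1.mpr h'), Or.inr (mem_levSet2.mpr h')]
      · exact Or.inr (mem_pairSingle (z := j) hik (mem_levSet1.mpr (by omega))
          (mem_levSet1.mpr (by omega)) (mem_levSet2.mpr (by omega)) (by ext t; simp; try tauto))
    · rcases (show (c j : ℕ) = 0 ∨ (c j : ℕ) = 1 by omega) with h0 | h0
      · refine Or.inl (mem_pairSingle (z := i) hjk (mem_levSet0.mpr (by omega))
          (mem_levSet0.mpr (by omega)) (Finset.mem_union.mpr ?_) (by ext t; simp; try tauto))
        rcases (show (c i : ℕ) = 1 ∨ (c i : ℕ) = 2 by omega) with h' | h'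
        exacts [Or.inl (mem_levSet1.mpr h'), Or.inr (mem_levSet2.mpr h')]
      · exact Or.inr (mem_pairSingle (z := i) hjk (mem_levSet1.mpr (by omega))
          (mem_levSet1.mpr (by omega)) (mem_levSet2.mpr (by omega)) (by ext t; simp; try tauto))
  · rintro (h | h)
    · obtain ⟨x, y, z, hxy, hx, hy, hz, rfl⟩ := of_mem_pairSingle h
      rw [mem_levSet0] at hx hy
      have hz' : (c z : ℕ) = 1 ∨ (c z : ℕ) = 2 := by
        rcases Finset.mem_union.mp hz with h' | h'
        exacts [Or.inl (mem_levSet1.mp h'), Or.inr (mem_levSet2.mp h')]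
      refine ⟨x, y, z, hxy, fun h' => by rw [h'] at hx; omega,
        fun h' => by rw [h'] at hy; omega, by ext t; simp; try tauto, Or.inl ?_⟩
      simp only [Head021U, NullDyad, TransAdj]
      rcases hz' with h' | h' <;> omega
    · obtain ⟨x, y, z, hxy, hx, hy, hz, rfl⟩ := of_mem_pairSingle h
      rw [mem_levSet1] at hx hy
      rw [mem_levSet2] at hz
      refine ⟨x, y, z, hxy, fun h' => by rw [h'] at hx; omega,
        fun h' => by rw [h'] at hy; omega, by ext t; simp; try tauto, Or.inl ?_⟩
      simp only [Head021U, NullDyad, TransAdj]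
      omega

set_option maxHeartbeats 1000000 in
private lemma census_E3 [Fintype V] (c : V → Fin 3) :
    {s : Finset V | InducesTriad (Triad021D (TransAdj c)) s}
    = ↑(pairSingle (levSet c 1) (levSet c 0) ∪ pairSingle (levSet c 2) (levSet c 0) ∪
        pairSingle (levSet c 2) (levSet c 1)) := by
  ext s
  simp only [Set.mem_setOf_eq, Finset.mem_coe, Finset.mem_union, or_assoc]
  constructor
  · rintro ⟨i, j, k, hij, hik, hjk, rfl, hT⟩
    have bi := (c i).isLt
    have bj := (c j).isLt
    have bk := (c k).isLt
    simp only [Triad021D, Tail021D, NullDyad, TransAdj] at hT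
    rcases hT with ⟨h1, h2, -, -, h5, h6⟩ | ⟨h1, h2, -, -, h5, h6⟩ |
      ⟨h1, h2, -, -, h5, h6⟩
    · rcases (show ((c i : ℕ) = 1 ∧ (c k : ℕ) = 0) ∨ ((c i : ℕ) = 2 ∧ (c k : ℕ) = 0) ∨
          ((c i : ℕ) = 2 ∧ (c k : ℕ) = 1) by omega) with ⟨ha, hb⟩ | ⟨ha, hb⟩ | ⟨ha, hb⟩
      · exact Or.inl (mem_pairSingle hij (mem_levSet1.mpr (by omega))
          (mem_levSet1.mpr (by omega)) (mem_levSet0.mpr hb) (by ext t; simp; try tauto))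
      · exact Or.inr (Or.inl (mem_pairSingle hij (mem_levSet2.mpr (by omega))
          (mem_levSet2.mpr (by omega)) (mem_levSet0.mpr hb) (by ext t; simp; try tauto)))
      · exact Or.inr (Or.inr (mem_pairSingle hij (mem_levSet2.mpr (by omega))
          (mem_levSet2.mpr (by omega)) (mem_levSet1.mpr hb) (by ext t; simp; try tauto)))
    · rcases (show ((c i : ℕ) = 1 ∧ (c j : ℕ) = 0) ∨ ((c i : ℕ) = 2 ∧ (c j : ℕ) = 0) ∨
          ((c i : ℕ) = 2 ∧ (c j : ℕ) = 1) by omega) with ⟨ha, hb⟩ | ⟨ha, hb⟩ | ⟨ha, hb⟩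
      · exact Or.inl (mem_pairSingle hik (mem_levSet1.mpr (by omega))
          (mem_levSet1.mpr (by omega)) (mem_levSet0.mpr hb) (by ext t; simp; try tauto))
      · exact Or.inr (Or.inl (mem_pairSingle hik (mem_levSet2.mpr (by omega))
          (mem_levSet2.mpr (by omega)) (mem_levSet0.mpr hb) (by ext t; simp; try tauto)))
      · exact Or.inr (Or.inr (mem_pairSingle hik (mem_levSet2.mpr (by omega))
          (mem_levSet2.mpr (by omega)) (mem_levSet1.mpr hb) (by ext t; simp; try tauto)))
    · rcases (show ((c j : ℕ) = 1 ∧ (c i : ℕ) = 0) ∨ ((c j : ℕ) = 2 ∧ (c i : ℕ) = 0) ∨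
          ((c j : ℕ) = 2 ∧ (c i : ℕ) = 1) by omega) with ⟨ha, hb⟩ | ⟨ha, hb⟩ | ⟨ha, hb⟩
      · exact Or.inl (mem_pairSingle hjk (mem_levSet1.mpr (by omega))
          (mem_levSet1.mpr (by omega)) (mem_levSet0.mpr hb) (by ext t; simp; try tauto))
      · exact Or.inr (Or.inl (mem_pairSingle hjk (mem_levSet2.mpr (by omega))
          (mem_levSet2.mpr (by omega)) (mem_levSet0.mpr hb) (by ext t; simp; try tauto)))
      · exact Or.inr (Or.inr (mem_pairSingle hjk (mem_levSet2.mpr (by omega))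
          (mem_levSet2.mpr (by omega)) (mem_levSet1.mpr hb) (by ext t; simp; try tauto)))
  · rintro (h | h | h)
    · obtain ⟨x, y, z, hxy, hx, hy, hz, rfl⟩ := of_mem_pairSingle h
      rw [mem_levSet1] at hx hy
      rw [mem_levSet0] at hz
      refine ⟨x, y, z, hxy, fun h' => by rw [h'] at hx; omega,
        fun h' => by rw [h'] at hy; omega, by ext t; simp; try tauto, Or.inl ?_⟩
      simp only [Tail021D, NullDyad, TransAdj]
      omega
    · obtain ⟨x, y, z, hxy, hx, hy, hz, rfl⟩ := of_mem_pairSingle h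
      rw [mem_levSet2] at hx hy
      rw [mem_levSet0] at hz
      refine ⟨x, y, z, hxy, fun h' => by rw [h'] at hx; omega,
        fun h' => by rw [h'] at hy; omega, by ext t; simp; try tauto, Or.inl ?_⟩
      simp only [Tail021D, NullDyad, TransAdj]
      omega
    · obtain ⟨x, y, z, hxy, hx, hy, hz, rfl⟩ := of_mem_pairSingle h
      rw [mem_levSet2] at hx hy
      rw [mem_levSet1] at hz
      refine ⟨x, y, z, hxy, fun h' => by rw [h'] at hx; omega,
        fun h' => by rw [h'] at hy; omega, by ext t; simp; try tauto, Or.inl ?_⟩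
      simp only [Tail021D, NullDyad, TransAdj]
      omega

set_option maxHeartbeats 1000000 in
private lemma census_E4 [Fintype V] (c : V → Fin 3) :
    {s : Finset V | InducesTriad (Triad003 (TransAdj c)) s}
    = ↑((levSet c 0).powersetCard 3 ∪ (levSet c 1).powersetCard 3 ∪
        (levSet c 2).powersetCard 3) := by
  ext s
  simp only [Set.mem_setOf_eq, Finset.mem_coe, Finset.mem_union, or_assoc]
  constructor
  · rintro ⟨i, j, k, hij, hik, hjk, rfl, hT⟩
    have bi := (c i).isLt
    have bj := (c j).isLt
    have bk := (c k).isLt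
    simp only [Triad003, NullDyad, TransAdj] at hT
    obtain ⟨⟨h1, h2⟩, ⟨h3, h4⟩, h5, h6⟩ := hT
    rcases (show (c i : ℕ) = 0 ∨ (c i : ℕ) = 1 ∨ (c i : ℕ) = 2 by omega) with h0 | h0 | h0
    · exact Or.inl (mem_ps3 hij hik hjk (mem_levSet0.mpr (by omega))
        (mem_levSet0.mpr (by omega)) (mem_levSet0.mpr (by omega)))
    · exact Or.inr (Or.inl (mem_ps3 hij hik hjk (mem_levSet1.mpr (by omega))
        (mem_levSet1.mpr (by omega)) (mem_levSet1.mpr (by omega))))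
    · exact Or.inr (Or.inr (mem_ps3 hij hik hjk (mem_levSet2.mpr (by omega))
        (mem_levSet2.mpr (by omega)) (mem_levSet2.mpr (by omega))))
  · rintro (h | h | h)
    · obtain ⟨x, y, z, hxy, hxz, hyz, hx, hy, hz, rfl⟩ := of_mem_ps3 h
      rw [mem_levSet0] at hx hy hz
      refine ⟨x, y, z, hxy, hxz, hyz, rfl, ?_⟩
      simp only [Triad003, NullDyad, TransAdj]
      omega
    · obtain ⟨x, y, z, hxy, hxz, hyz, hx, hy, hz, rfl⟩ := of_mem_ps3 h
      rw [mem_levSet1] at hx hy hz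
      refine ⟨x, y, z, hxy, hxz, hyz, rfl, ?_⟩
      simp only [Triad003, NullDyad, TransAdj]
      omega
    · obtain ⟨x, y, z, hxy, hxz, hyz, hx, hy, hz, rfl⟩ := of_mem_ps3 h
      rw [mem_levSet2] at hx hy hz
      refine ⟨x, y, z, hxy, hxz, hyz, rfl, ?_⟩
      simp only [Triad003, NullDyad, TransAdj]
      omega
-- disjointness for unions

set_option maxHeartbeats 1000000 in
private lemma census_D2 [Fintype V] (c : V → Fin 3) :
    Disjoint (pairSingle (levSet c 0) (levSet c 1 ∪ levSet c 2))
    (pairSingle (levSet c 1) (levSet c 2)) := by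
  rw [Finset.disjoint_left]
  intro s h1 h2
  obtain ⟨x, y, z, hxy, hx, hy, hz, rfl⟩ := of_mem_pairSingle h1
  obtain ⟨x', y', z', hxy', hx', hy', hz', he⟩ := of_mem_pairSingle h2
  rw [mem_levSet0] at hx hy
  rw [mem_levSet1] at hx' hy'
  rw [mem_levSet2] at hz'
  have m1 : x' = z ∨ x' = x ∨ x' = y := by
    have hm : x' ∈ insert z ({x, y} : Finset V) := by rw [he]; simp
    simpa using hm
  have m2 : y' = z ∨ y' = x ∨ y' = y := by
    have hm : y' ∈ insert z ({x, y} : Finset V) := by rw [he]; simp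
    simpa using hm
  rcases m1 with rfl | rfl | rfl <;> rcases m2 with rfl | rfl | rfl <;>
    first | omega | exact hxy' rfl

set_option maxHeartbeats 1000000 in
private lemma census_D3a [Fintype V] (c : V → Fin 3) :
    Disjoint (pairSingle (levSet c 1) (levSet c 0))
    (pairSingle (levSet c 2) (levSet c 0)) := by
  rw [Finset.disjoint_left]
  intro s h1 h2
  obtain ⟨x, y, z, hxy, hx, hy, hz, rfl⟩ := of_mem_pairSingle h1
  obtain ⟨x', y', z', hxy', hx', hy', hz', he⟩ := of_mem_pairSingle h2
  rw [mem_levSet1] at hx hy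
  rw [mem_levSet0] at hz
  rw [mem_levSet2] at hx' hy'
  have m1 : x' = z ∨ x' = x ∨ x' = y := by
    have hm : x' ∈ insert z ({x, y} : Finset V) := by rw [he]; simp
    simpa using hm
  rcases m1 with rfl | rfl | rfl <;> omega

set_option maxHeartbeats 1000000 in
private lemma census_D3b [Fintype V] (c : V → Fin 3) :
    Disjoint (pairSingle (levSet c 1) (levSet c 0))
    (pairSingle (levSet c 2) (levSet c 1)) := by
  rw [Finset.disjoint_left]
  intro s h1 h2
  obtain ⟨x, y, z, hxy, hx, hy, hz, rfl⟩ := of_mem_pairSingle h1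
  obtain ⟨x', y', z', hxy', hx', hy', hz', he⟩ := of_mem_pairSingle h2
  rw [mem_levSet1] at hx hy
  rw [mem_levSet0] at hz
  rw [mem_levSet2] at hx' hy'
  have m1 : x' = z ∨ x' = x ∨ x' = y := by
    have hm : x' ∈ insert z ({x, y} : Finset V) := by rw [he]; simp
    simpa using hm
  rcases m1 with rfl | rfl | rfl <;> omega

set_option maxHeartbeats 1000000 in
private lemma census_D3c [Fintype V] (c : V → Fin 3) :
    Disjoint (pairSingle (levSet c 2) (levSet c 0))
    (pairSingle (levSet c 2) (levSet c 1)) := by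
  rw [Finset.disjoint_left]
  intro s h1 h2
  obtain ⟨x, y, z, hxy, hx, hy, hz, rfl⟩ := of_mem_pairSingle h1
  obtain ⟨x', y', z', hxy', hx', hy', hz', he⟩ := of_mem_pairSingle h2
  rw [mem_levSet2] at hx hy
  rw [mem_levSet0] at hz
  rw [mem_levSet1] at hz'
  have m1 : z' = z ∨ z' = x ∨ z' = y := by
    have hm : z' ∈ insert z ({x, y} : Finset V) := by rw [he]; simp
    simpa using hm
  rcases m1 with rfl | rfl | rfl <;> omega

set_option maxHeartbeats 1000000 in
private lemma census_dps [Fintype V] (c : V → Fin 3) :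
    ∀ x y : Fin 3, x ≠ y →
    Disjoint ((levSet c x).powersetCard 3) ((levSet c y).powersetCard 3) := by
  intro x y hxy
  rw [Finset.disjoint_left]
  intro s h1 h2
  obtain ⟨hs1, hc⟩ := Finset.mem_powersetCard.mp h1
  obtain ⟨hs2, -⟩ := Finset.mem_powersetCard.mp h2
  obtain ⟨v, hv⟩ := Finset.card_pos.mp (by omega : 0 < s.card)
  exact Finset.disjoint_left.mp (levSet_disj c hxy) (hs1 hv) (hs2 hv)

end CensusAux

set_option maxHeartbeats 1000000 in
/-- Triad census of the ideal transitivity network without complete diagonal blocks. -/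
theorem trans_triad_census {V : Type*} [Fintype V] [DecidableEq V]
    (c : V → Fin 3) (n₀ n₁ n₂ : ℕ)
    (h₀ : n₀ = (Finset.univ.filter fun v => c v = 0).card)
    (h₁ : n₁ = (Finset.univ.filter fun v => c v = 1).card)
    (h₂ : n₂ = (Finset.univ.filter fun v => c v = 2).card) :
    {s : Finset V | InducesTriad (Triad030T (TransAdj c)) s}.ncard = n₀ * n₁ * n₂ ∧
    {s : Finset V | InducesTriad (Triad021U (TransAdj c)) s}.ncard
        = n₀.choose 2 * (n₁ + n₂) + n₁.choose 2 * n₂ ∧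
    {s : Finset V | InducesTriad (Triad021D (TransAdj c)) s}.ncard
        = n₀ * (n₁.choose 2 + n₂.choose 2) + n₁ * n₂.choose 2 ∧
    {s : Finset V | InducesTriad (Triad003 (TransAdj c)) s}.ncard
        = n₀.choose 3 + n₁.choose 3 + n₂.choose 3 ∧
    (∀ s : Finset V, s.card = 3 →
        InducesTriad (Triad030T (TransAdj c)) s ∨
        InducesTriad (Triad021U (TransAdj c)) s ∨
        InducesTriad (Triad021D (TransAdj c)) s ∨
        InducesTriad (Triad003 (TransAdj c)) s) := by

  have c0 : (levSet c 0).card = n₀ := by rw [h₀]; rfl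
  have c1 : (levSet c 1).card = n₁ := by rw [h₁]; rfl
  have c2 : (levSet c 2).card = n₂ := by rw [h₂]; rfl
  -- set equalities
  have E1 := census_E1 c
  have E2 := census_E2 c
  have E3 := census_E3 c
  have E4 := census_E4 c
  have D2 := census_D2 c
  have D3a := census_D3a c
  have D3b := census_D3b c
  have D3c := census_D3c c
  have dps := census_dps c
  refine ⟨?_, ?_, ?_, ?_, ?_⟩
  · rw [E1, Set.ncard_coe_finset,
      card_oneOneOne _ _ _ (levSet_disj c (by decide)) (levSet_disj c (by decide))
        (levSet_disj c (by decide)), c0, c1, c2]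
  · rw [E2, Set.ncard_coe_finset, Finset.card_union_of_disjoint D2,
      card_pairSingle _ _ (Finset.disjoint_union_right.mpr
        ⟨levSet_disj c (by decide), levSet_disj c (by decide)⟩),
      card_pairSingle _ _ (levSet_disj c (by decide)),
      Finset.card_union_of_disjoint (levSet_disj c (by decide)), c0, c1, c2]
  · rw [E3, Set.ncard_coe_finset,
      Finset.card_union_of_disjoint (Finset.disjoint_union_left.mpr ⟨D3b, D3c⟩),
      Finset.card_union_of_disjoint D3a,
      card_pairSingle _ _ (levSet_disj c (by decide)),
      card_pairSingle _ _ (levSet_disj c (by decide)),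
      card_pairSingle _ _ (levSet_disj c (by decide)), c0, c1, c2]
    ring
  · rw [E4, Set.ncard_coe_finset,
      Finset.card_union_of_disjoint (Finset.disjoint_union_left.mpr
        ⟨dps 0 2 (by decide), dps 1 2 (by decide)⟩),
      Finset.card_union_of_disjoint (dps 0 1 (by decide)),
      Finset.card_powersetCard, Finset.card_powersetCard, Finset.card_powersetCard,
      c0, c1, c2]
  · intro s hs
    obtain ⟨i, j, k, hij, hik, hjk, rfl⟩ := Finset.card_eq_three.mp hs
    have key : Triad030T (TransAdj c) i j k ∨ Triad021U (TransAdj c) i j k ∨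
        Triad021D (TransAdj c) i j k ∨ Triad003 (TransAdj c) i j k := by
      simp only [Triad030T, Trans030, Triad021U, Head021U, Triad021D, Tail021D,
        Triad003, NullDyad, TransAdj]
      rcases lt_trichotomy ((c i : ℕ)) ((c j : ℕ)) with h1 | h1 | h1 <;>
      rcases lt_trichotomy ((c j : ℕ)) ((c k : ℕ)) with h2 | h2 | h2 <;>
      rcases lt_trichotomy ((c i : ℕ)) ((c k : ℕ)) with h3 | h3 | h3 <;>
      first
      | exact Or.inl (Or.inl (by omega))
      | exact Or.inl (Or.inr (Or.inl (by omega)))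
      | exact Or.inl (Or.inr (Or.inr (Or.inl (by omega))))
      | exact Or.inl (Or.inr (Or.inr (Or.inr (Or.inl (by omega)))))
      | exact Or.inl (Or.inr (Or.inr (Or.inr (Or.inr (Or.inl (by omega))))))
      | exact Or.inl (Or.inr (Or.inr (Or.inr (Or.inr (Or.inr (by omega))))))
      | exact Or.inr (Or.inl (Or.inl (by omega)))
      | exact Or.inr (Or.inl (Or.inr (Or.inl (by omega))))
      | exact Or.inr (Or.inl (Or.inr (Or.inr (by omega))))
      | exact Or.inr (Or.inr (Or.inl (Or.inl (by omega))))
      | exact Or.inr (Or.inr (Or.inl (Or.inr (Or.inl (by omega)))))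
      | exact Or.inr (Or.inr (Or.inl (Or.inr (Or.inr (by omega)))))
      | exact Or.inr (Or.inr (Or.inr (by omega)))
    rcases key with h | h | h | h
    · exact Or.inl ⟨i, j, k, hij, hik, hjk, rfl, h⟩
    · exact Or.inr (Or.inl ⟨i, j, k, hij, hik, hjk, rfl, h⟩)
    · exact Or.inr (Or.inr (Or.inl ⟨i, j, k, hij, hik, hjk, rfl, h⟩))
    · exact Or.inr (Or.inr (Or.inr ⟨i, j, k, hij, hik, hjk, rfl, h⟩))
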